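/- arXiv:1012.2354 — 3 statements merged into one kernel-verified Lean document; each statement's English description precedes it below -/
import Mathlib

section
/- Let a be an aperiodic cycle of length r > 1 whose distinct entries are −n_i, with −n_i occurring r_i times. Then P₂(a) := (1−T)^2 Σ_k γ₂(a(k)) T^k is a Laurent polynomial equal to the sum over i of: T^{(n_i+2)/3}(2r_i + r_i T) if n_i ≡ 1 (mod 3); T^{(n_i+1)/3}(r_i + 2r_i T) if n_i ≡ 2 (mod 3); T^{n_i/3}·3r_i T if n_i ≡ 0 (mod 3). -/
/-- A function `a : ℤ → ℤ` has period `r`. -/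
def CyclePeriodic (a : ℤ → ℤ) (r : ℤ) : Prop := ∀ i, a (i + r) = a i

/-- `a` is an aperiodic cycle of length `r`: it has period `r` and no smaller
positive period. -/
def CycleAperiodic (a : ℤ → ℤ) (r : ℤ) : Prop :=
  CyclePeriodic a r ∧ ∀ d : ℤ, 0 < d → d < r → ¬ CyclePeriodic a d

/-- `i` is the first index of a bloc (a maximal run of equal consecutive entries). -/
def blocStart (a : ℤ → ℤ) (i : ℤ) : Prop := a (i - 1) ≠ a i

instance (a : ℤ → ℤ) (i : ℤ) : Decidable (blocStart a i) :=
  inferInstanceAs (Decidable (_ ≠ _))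

/-- The length of the bloc starting at `i`. -/
noncomputable def blocLen (a : ℤ → ℤ) (i : ℤ) : ℤ :=
  sInf {l : ℤ | 0 < l ∧ a (i + l) ≠ a i}

/-- `ε` of the bloc starting at `i`: `1` if locally maximal (both neighbouring
blocs have strictly smaller entries), `-1` if locally minimal, `0` otherwise. -/
noncomputable def blocEps (a : ℤ → ℤ) (i : ℤ) : ℤ :=
  if a (i - 1) < a i ∧ a (i + blocLen a i) < a i then 1
  else if a i < a (i - 1) ∧ a i < a (i + blocLen a i) then -1
  else 0

/-- `ε*` of the bloc starting at `i`: equal to `ε`, except it is `0` for a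
locally maximal bloc with entry `0`. -/
noncomputable def blocEpsStar (a : ℤ → ℤ) (i : ℤ) : ℤ :=
  if a i = 0 ∧ blocEps a i = 1 then 0 else blocEps a i

/-- `i` is the first index of a positive part (a maximal run of entries `≥ 0`). -/
def partStart (a : ℤ → ℤ) (i : ℤ) : Prop := 0 ≤ a i ∧ a (i - 1) < 0

instance (a : ℤ → ℤ) (i : ℤ) : Decidable (partStart a i) :=
  inferInstanceAs (Decidable (_ ∧ _))

/-- The length of the positive part starting at `i`. -/
noncomputable def partLen (a : ℤ → ℤ) (i : ℤ) : ℤ :=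
  sInf {l : ℤ | 0 < l ∧ a (i + l) < 0}

/-- `θ(p)` for the positive part `p` starting at `i`: `l(p)` if `p` is a single
bloc of zeroes, and `1 + l(p)` otherwise.  (The case `l(p) = r` does not occur
for a part with a genuine start.) -/
noncomputable def thetaP (a : ℤ → ℤ) (i : ℤ) : ℤ :=
  if ∀ k ∈ Finset.Ico i (i + partLen a i), a k = 0 then partLen a i
  else partLen a i + 1

/-- `θ(a) = Σ θ(p)` over the positive parts of `a`, computed from the window
`[t, t+r)`; when all entries are `≥ 0` the whole cycle is a single positive
part `p` with `θ(p) = l(p) = r`. -/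
noncomputable def thetaSum (a : ℤ → ℤ) (r t : ℤ) : ℤ :=
  if ∀ j ∈ Finset.Ico t (t + r), 0 ≤ a j then r
  else ∑ i ∈ Finset.Ico t (t + r), if partStart a i then thetaP a i else 0

/-- `γ₁(a)` : the number of entries of `a` that are `≥ 0`. -/
noncomputable def gammaOne (a : ℤ → ℤ) (r t : ℤ) : ℤ :=
  ∑ i ∈ Finset.Ico t (t + r), if 0 ≤ a i then 1 else 0

/-- `γ₂(a) = Σ max(aᵢ, 0)`. -/
noncomputable def gammaTwo (a : ℤ → ℤ) (r t : ℤ) : ℤ :=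
  ∑ i ∈ Finset.Ico t (t + r), max (a i) 0

/-- `γ₃(a) = Σ ε*(b)` over the positive blocs of `a`. -/
noncomputable def gammaThree (a : ℤ → ℤ) (r t : ℤ) : ℤ :=
  ∑ i ∈ Finset.Ico t (t + r),
    if blocStart a i ∧ 0 ≤ a i then blocEpsStar a i else 0

/-- Pointwise second difference of `k ↦ max (-ν + 3k) 0`. -/
lemma Dval (ν k : ℤ) :
    max (-ν + 3 * k) 0 - 2 * max (-ν + 3 * (k - 1)) 0 + max (-ν + 3 * (k - 2)) 0 =
      (if ν % 3 = 1 then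
        (if k = (ν + 2) / 3 then 2 else 0) + (if k = (ν + 2) / 3 + 1 then 1 else 0)
      else if ν % 3 = 2 then
        (if k = (ν + 1) / 3 then 1 else 0) + (if k = (ν + 1) / 3 + 1 then 2 else 0)
      else
        (if k = ν / 3 + 1 then 3 else 0)) := by
  simp only [max_def]
  split_ifs <;> omega

/-- Lemma 2.3: for an aperiodic cycle of length `r > 1` whose distinct entries
are the `-n i` (with multiplicity `m i`), the Laurent polynomial
`P₂(a) = (1-T)² Σ_k γ₂(a(k)) Tᵏ` (given coefficient-wise by
`c k - 2c(k-1) + c(k-2)` with `c k = γ₂(a(k))`) is the sum over `i` of: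
`T^{(nᵢ+2)/3}(2mᵢ + mᵢT)` if `nᵢ ≡ 1 (3)`, `T^{(nᵢ+1)/3}(mᵢ + 2mᵢT)` if
`nᵢ ≡ 2 (3)`, and `T^{nᵢ/3}·3mᵢT` if `nᵢ ≡ 0 (3)`. -/
theorem P_two_formula (a : ℤ → ℤ) (r : ℤ) (hr : 1 < r)
    (hap : CycleAperiodic a r) (t : ℤ)
    (ι : Type*) [Fintype ι] [DecidableEq ι] (n : ι → ℤ)
    (hninj : Function.Injective n)
    (hcover : ∀ j ∈ Finset.Ico t (t + r), ∃ i, a j = -n i)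
    (honto : ∀ i, ∃ j ∈ Finset.Ico t (t + r), a j = -n i)
    (m : ι → ℤ)
    (hm : ∀ i, m i = ((Finset.Ico t (t + r)).filter fun j => a j = -n i).card) :
    ∀ k : ℤ,
      gammaTwo (fun j => a j + 3 * k) r t -
          2 * gammaTwo (fun j => a j + 3 * (k - 1)) r t +
          gammaTwo (fun j => a j + 3 * (k - 2)) r t =
        ∑ i,
          if n i % 3 = 1 then
            (if k = (n i + 2) / 3 then 2 * m i else 0) +
              (if k = (n i + 2) / 3 + 1 then m i else 0)
          else if n i % 3 = 2 then
            (if k = (n i + 1) / 3 then m i else 0) +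
              (if k = (n i + 1) / 3 + 1 then 2 * m i else 0)
          else
            (if k = n i / 3 + 1 then 3 * m i else 0) := by
  intro k
  classical
  have hts : t ∈ Finset.Ico t (t + r) := by
    simp only [Finset.mem_Ico]; omega
  obtain ⟨i0, _⟩ := hcover t hts
  set s := Finset.Ico t (t + r) with hs
  -- classification function
  set g : ℤ → ι := fun j => if h : ∃ i, a j = -n i then h.choose else i0 with hg
  have hgspec : ∀ j ∈ s, a j = -n (g j) := by
    intro j hj
    have h := hcover j hj
    simp only [hg, dif_pos h]
    exact h.choose_spec
  have hLHS :
      gammaTwo (fun j => a j + 3 * k) r t -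
          2 * gammaTwo (fun j => a j + 3 * (k - 1)) r t +
          gammaTwo (fun j => a j + 3 * (k - 2)) r t =
        ∑ j ∈ s, (max (a j + 3 * k) 0 - 2 * max (a j + 3 * (k - 1)) 0 +
            max (a j + 3 * (k - 2)) 0) := by
    simp [gammaTwo, hs, Finset.sum_add_distrib, Finset.sum_sub_distrib, Finset.mul_sum]
  rw [hLHS]
  rw [← Finset.sum_fiberwise_of_maps_to (g := g) (t := Finset.univ)
    (fun j _ => Finset.mem_univ (g j))]
  refine Finset.sum_congr rfl fun i _ => ?_
  have hfilter : s.filter (fun j => g j = i) = s.filter (fun j => a j = -n i) := by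
    ext j
    simp only [Finset.mem_filter, and_congr_right_iff]
    intro hj
    constructor
    · rintro rfl; exact hgspec j hj
    · intro h
      have := hgspec j hj
      have : n (g j) = n i := by omega
      exact hninj this
  rw [hfilter]
  have hconst : ∀ j ∈ s.filter (fun j => a j = -n i),
      max (a j + 3 * k) 0 - 2 * max (a j + 3 * (k - 1)) 0 + max (a j + 3 * (k - 2)) 0 =
      max (-n i + 3 * k) 0 - 2 * max (-n i + 3 * (k - 1)) 0 + max (-n i + 3 * (k - 2)) 0 := by
    intro j hj
    rw [Finset.mem_filter] at hj
    rw [hj.2]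
  rw [Finset.sum_congr rfl hconst, Finset.sum_const, Dval]
  rw [hm i]
  simp only [nsmul_eq_mul]
  split_ifs <;> ring
end

section
/- Let a be an aperiodic cycle of length r > 1 with distinct entries −n_i. Let s_i = Σ ε(b) over blocs b with entry −n_i, and for n_i ≡ 0 (mod 3) let B_i be the number of locally maximal blocs with entry −n_i. Then P₃(a) := (1−T)^2 Σ_k γ₃(a(k)) T^k equals the sum over i of: T^{(n_i+2)/3}(s_i − s_i T) if n_i ≡ 1 (mod 3); T^{(n_i+1)/3}(s_i − s_i T) if n_i ≡ 2 (mod 3); T^{n_i/3}(s_i − s_i T − B_i(1−T)^2) if n_i ≡ 0 (mod 3). -/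
lemma blocLen_shift (a : ℤ → ℤ) (c i : ℤ) :
    blocLen (fun x => a x + c) i = blocLen a i := by
  unfold blocLen
  congr 1
  ext l
  simp only [Set.mem_setOf_eq, ne_eq, add_left_inj]

lemma blocEps_shift (a : ℤ → ℤ) (c i : ℤ) :
    blocEps (fun x => a x + c) i = blocEps a i := by
  unfold blocEps
  rw [blocLen_shift]
  simp only [add_lt_add_iff_right]

lemma blocStart_shift (a : ℤ → ℤ) (c i : ℤ) :
    blocStart (fun x => a x + c) i ↔ blocStart a i := by
  simp only [blocStart, ne_eq, add_left_inj]

set_option maxHeartbeats 2000000 in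
lemma step_lemma (m s B k : ℤ) :
    ((if m ≤ 3*k then s else 0) - (if m = 3*k then B else 0))
    - 2*((if m ≤ 3*(k-1) then s else 0) - (if m = 3*(k-1) then B else 0))
    + ((if m ≤ 3*(k-2) then s else 0) - (if m = 3*(k-2) then B else 0))
    = (if m % 3 = 1 then
        (if k = (m+2)/3 then s else 0) + (if k = (m+2)/3+1 then -s else 0)
      else if m % 3 = 2 then
        (if k = (m+1)/3 then s else 0) + (if k = (m+1)/3+1 then -s else 0)
      else
        (if k = m/3 then s - B else 0) + (if k = m/3+1 then -s + 2*B else 0)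
          + (if k = m/3+2 then -B else 0)) := by
  split_ifs <;> omega

/-- Theorem 2.9: for an aperiodic cycle of length `r > 1` with distinct entries
`-n i`, let `s i = Σ ε(b)` over blocs with entry `-n i` and `B i` the number of
locally maximal blocs with entry `-n i`.  Then the Laurent polynomial
`P₃(a) = (1-T)² Σ_k γ₃(a(k)) Tᵏ` (given coefficient-wise by
`c k - 2c(k-1) + c(k-2)` with `c k = γ₃(a(k))`) is the sum over `i` of:
`T^{(nᵢ+2)/3}(sᵢ - sᵢT)` if `nᵢ ≡ 1 (3)`, `T^{(nᵢ+1)/3}(sᵢ - sᵢT)` if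
`nᵢ ≡ 2 (3)`, and `T^{nᵢ/3}(sᵢ - sᵢT - Bᵢ(1-T)²)` if `nᵢ ≡ 0 (3)`. -/
theorem P_three_formula (a : ℤ → ℤ) (r : ℤ) (hr : 1 < r)
    (hap : CycleAperiodic a r) (t : ℤ)
    (ι : Type*) [Fintype ι] [DecidableEq ι] (n : ι → ℤ)
    (hninj : Function.Injective n)
    (hcover : ∀ j ∈ Finset.Ico t (t + r), ∃ i, a j = -n i)
    (honto : ∀ i, ∃ j ∈ Finset.Ico t (t + r), a j = -n i)
    (s B : ι → ℤ)
    (hs : ∀ i, s i = ∑ j ∈ Finset.Ico t (t + r),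
      if blocStart a j ∧ a j = -n i then blocEps a j else 0)
    (hB : ∀ i, B i = ∑ j ∈ Finset.Ico t (t + r),
      if blocStart a j ∧ a j = -n i ∧ blocEps a j = 1 then 1 else 0) :
    ∀ k : ℤ,
      gammaThree (fun j => a j + 3 * k) r t -
          2 * gammaThree (fun j => a j + 3 * (k - 1)) r t +
          gammaThree (fun j => a j + 3 * (k - 2)) r t =
        ∑ i,
          if n i % 3 = 1 then
            (if k = (n i + 2) / 3 then s i else 0) +
              (if k = (n i + 2) / 3 + 1 then -s i else 0)
          else if n i % 3 = 2 then
            (if k = (n i + 1) / 3 then s i else 0) +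
              (if k = (n i + 1) / 3 + 1 then -s i else 0)
          else
            (if k = n i / 3 then s i - B i else 0) +
              (if k = n i / 3 + 1 then -s i + 2 * B i else 0) +
              (if k = n i / 3 + 2 then -B i else 0) := by
  intro k
  -- Key lemma: closed form for γ₃ of the shifted cycle
  have key : ∀ K : ℤ, gammaThree (fun j => a j + 3 * K) r t =
      ∑ i, ((if n i ≤ 3*K then s i else 0) - (if n i = 3*K then B i else 0)) := by
    intro K
    have hgamma : gammaThree (fun j => a j + 3 * K) r t =
        ∑ j ∈ Finset.Ico t (t + r),
          if blocStart a j ∧ 0 ≤ a j + 3 * K then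
            (if a j + 3 * K = 0 ∧ blocEps a j = 1 then 0 else blocEps a j)
          else 0 := by
      unfold gammaThree
      refine Finset.sum_congr rfl fun j _ => ?_
      have h2 : blocEpsStar (fun x => a x + 3 * K) j =
          if a j + 3 * K = 0 ∧ blocEps a j = 1 then 0 else blocEps a j := by
        unfold blocEpsStar
        simp only [blocEps_shift]
      simp only [blocStart_shift, h2]
    rw [hgamma]
    -- expand each term as a sum over i
    have hexp : ∀ j ∈ Finset.Ico t (t + r),
        (if blocStart a j ∧ 0 ≤ a j + 3 * K then
            (if a j + 3 * K = 0 ∧ blocEps a j = 1 then 0 else blocEps a j)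
          else 0) =
        ∑ i, (if a j = -n i then
          (if blocStart a j ∧ 0 ≤ a j + 3 * K then
            (if a j + 3 * K = 0 ∧ blocEps a j = 1 then 0 else blocEps a j)
          else 0) else 0) := by
      intro j hj
      obtain ⟨i₀, hi₀⟩ := hcover j hj
      rw [Finset.sum_eq_single i₀]
      · simp [hi₀]
      · intro i _ hne
        rw [if_neg]
        intro h
        exact hne (hninj (by omega))
      · intro h; exact absurd (Finset.mem_univ i₀) h
    rw [Finset.sum_congr rfl hexp, Finset.sum_comm]
    refine Finset.sum_congr rfl fun i _ => ?_
    -- per-term rewrite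
    have hterm : ∀ j ∈ Finset.Ico t (t + r),
        (if a j = -n i then
          (if blocStart a j ∧ 0 ≤ a j + 3 * K then
            (if a j + 3 * K = 0 ∧ blocEps a j = 1 then 0 else blocEps a j)
          else 0) else 0) =
        (if n i ≤ 3*K then (if blocStart a j ∧ a j = -n i then blocEps a j else 0) else 0)
        - (if n i = 3*K then
            (if blocStart a j ∧ a j = -n i ∧ blocEps a j = 1 then 1 else 0) else 0) := by
      intro j _
      by_cases hj : a j = -n i
      · by_cases hbs : blocStart a j
        · simp only [hj, hbs, true_and, if_true]
          split_ifs <;> omega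
        · simp [hbs, hj]
      · by_cases hbs : blocStart a j <;> simp [hj, hbs]
    rw [Finset.sum_congr rfl hterm, Finset.sum_sub_distrib]
    congr 1
    · split_ifs with h
      · rw [hs]
      · simp
    · split_ifs with h
      · rw [hB]
      · simp
  rw [key k, key (k-1), key (k-2), Finset.mul_sum, ← Finset.sum_sub_distrib,
    ← Finset.sum_add_distrib]
  exact Finset.sum_congr rfl fun i _ => step_lemma (n i) (s i) (B i) k
end

section
/- Let a be an aperiodic cycle of length r > 1 with distinct entries −n_i, each appearing r_i times; let s_i and B_i be as defined from blocs. Set γ₄(a) = Σ max(a_j+1, 0) − θ(a). Then P₄(a) := (1−T)^2 Σ_k γ₄(a(k)) T^k equals the sum over i of: T^{(n_i+2)/3}((2r_i−s_i) + (r_i+s_i)T) if n_i ≡ 1 (mod 3); T^{(n_i+1)/3}((r_i−s_i) + (2r_i+s_i)T) if n_i ≡ 2 (mod 3); T^{n_i/3}(−s_i + (3r_i+s_i)T + B_i(1−T)^2) if n_i ≡ 0 (mod 3). -/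
namespace P4aux
lemma per_mul {b : ℤ → ℤ} {r : ℤ} (hb : CyclePeriodic b r) (x : ℤ) (n : ℤ) :
    b (x + n * r) = b x := by
  induction n using Int.induction_on with
  | zero => simp
  | succ n ih =>
      have := hb (x + n * r)
      rw [show x + ((n:ℤ)+1) * r = (x + (n:ℤ)*r) + r by ring, this, ih]
  | pred n ih =>
      have h := hb (x + (-(n:ℤ) - 1) * r)
      rw [show x + (-(n:ℤ) - 1) * r + r = x + (-(n:ℤ)) * r by ring] at h
      exact h.symm.trans ih

/-- reduce any index into the window `[t, t+r)` -/
lemma per_reduce {b : ℤ → ℤ} {r : ℤ} (hr : 0 < r) (hb : CyclePeriodic b r) (t j : ℤ) :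
    ∃ j' ∈ Finset.Ico t (t + r), b j' = b j := by
  refine ⟨t + (j - t) % r, ?_, ?_⟩
  · have h1 := Int.emod_nonneg (j - t) (by omega : r ≠ 0)
    have h2 := Int.emod_lt_of_pos (j - t) hr
    simp only [Finset.mem_Ico]; omega
  · have e : t + (j - t) % r = j + (-((j - t) / r)) * r := by
      have h := Int.emod_add_mul_ediv (j - t) r
      linarith [h]
    rw [e, per_mul hb]

lemma sum_Ico_consec (F : ℤ → ℤ) {a b c : ℤ} (hab : a ≤ b) (hbc : b ≤ c) :
    (∑ j ∈ Finset.Ico a b, F j) + ∑ j ∈ Finset.Ico b c, F j = ∑ j ∈ Finset.Ico a c, F j := by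
  rw [← Finset.Ico_union_Ico_eq_Ico hab hbc,
    Finset.sum_union (Finset.Ico_disjoint_Ico_consecutive a b c)]

lemma Ico_single (v : ℤ) : Finset.Ico v (v + 1) = {v} := by
  ext x; simp only [Finset.mem_Ico, Finset.mem_singleton]; omega

/-- window sums of periodic functions are shift invariant -/
lemma window_sum_shift {r : ℤ} (hr : 0 < r) (F : ℤ → ℤ) (hF : ∀ j, F (j + r) = F j)
    (t t' : ℤ) : ∑ j ∈ Finset.Ico t (t + r), F j = ∑ j ∈ Finset.Ico t' (t' + r), F j := by
  have step : ∀ u : ℤ, ∑ j ∈ Finset.Ico (u+1) (u+1+r), F j = ∑ j ∈ Finset.Ico u (u+r), F j := by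
    intro u
    have h1 : (∑ j ∈ Finset.Ico (u+1) (u+r), F j) + ∑ j ∈ Finset.Ico (u+r) (u+r+1), F j
        = ∑ j ∈ Finset.Ico (u+1) (u+r+1), F j :=
      sum_Ico_consec F (by omega) (by omega)
    have h2 : (∑ j ∈ Finset.Ico u (u+1), F j) + ∑ j ∈ Finset.Ico (u+1) (u+r), F j
        = ∑ j ∈ Finset.Ico u (u+r), F j :=
      sum_Ico_consec F (by omega) (by omega)
    rw [show u+1+r = u+r+1 by ring, ← h1, ← h2, Ico_single, Ico_single,
      Finset.sum_singleton, Finset.sum_singleton, hF u]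
    ring
  have key : ∀ d : ℤ, ∑ j ∈ Finset.Ico (t+d) (t+d+r), F j = ∑ j ∈ Finset.Ico t (t+r), F j := by
    intro d
    induction d using Int.induction_on with
    | zero => simp
    | succ n ih => rw [show t + ((n:ℤ)+1) = (t + (n:ℤ)) + 1 by ring, step, ih]
    | pred n ih => rw [← ih, show t + (-(n:ℤ)) = (t + (-(n:ℤ)-1)) + 1 by ring, step]
  have h := key (t' - t)
  rw [show t + (t' - t) = t' by ring] at h
  exact h.symm

/-- Doubly-periodic Fubini: swap a window sum with a banded inner sum. -/
lemma periodic_fubini {r : ℤ} (hr : 0 < r) (K : ℤ → ℤ → ℤ)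
    (hK : ∀ i j, K (i + r) (j + r) = K i j)
    (hsupp : ∀ i j, K i j ≠ 0 → i ≤ j ∧ j < i + r) (t : ℤ) :
    ∑ i ∈ Finset.Ico t (t + r), ∑ j ∈ Finset.Ico i (i + r), K i j
      = ∑ j ∈ Finset.Ico t (t + r), ∑ i ∈ Finset.Ico (t - r) (t + r), K i j := by
  have h1 : ∀ i ∈ Finset.Ico t (t + r),
      ∑ j ∈ Finset.Ico i (i + r), K i j = ∑ j ∈ Finset.Ico t (t + 2*r), K i j := by
    intro i hi
    simp only [Finset.mem_Ico] at hi
    apply Finset.sum_subset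
    · intro j hj; simp only [Finset.mem_Ico] at *; omega
    · intro j hj hj2; by_contra h
      have := hsupp i j h; simp only [Finset.mem_Ico] at *; omega
  rw [Finset.sum_congr rfl h1, Finset.sum_comm]
  have hsplit : (∑ j ∈ Finset.Ico t (t + r), ∑ i ∈ Finset.Ico t (t + r), K i j)
        + ∑ j ∈ Finset.Ico (t + r) (t + 2*r), ∑ i ∈ Finset.Ico t (t + r), K i j
      = ∑ j ∈ Finset.Ico t (t + 2*r), ∑ i ∈ Finset.Ico t (t + r), K i j :=
    sum_Ico_consec _ (by omega) (by omega)
  rw [← hsplit]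
  have h2 : ∀ j : ℤ, ∑ i ∈ Finset.Ico t (t+r), K i (j+r) = ∑ i ∈ Finset.Ico (t-r) t, K i j := by
    intro j
    have e : Finset.Ico t (t+r) = (Finset.Ico (t-r) t).map (addRightEmbedding r) := by
      rw [Finset.map_add_right_Ico]
      congr 1
      omega
    rw [e, Finset.sum_map]
    refine Finset.sum_congr rfl fun i _ => ?_
    simpa using hK i j
  have e2 : Finset.Ico (t+r) (t+2*r) = (Finset.Ico t (t+r)).map (addRightEmbedding r) := by
    rw [Finset.map_add_right_Ico]; congr 1; ring
  rw [e2, Finset.sum_map]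
  have h3 : ∀ j ∈ Finset.Ico t (t+r),
      ∑ i ∈ Finset.Ico t (t+r), K i (addRightEmbedding r j) = ∑ i ∈ Finset.Ico (t-r) t, K i j := by
    intro j _; simpa using h2 j
  rw [Finset.sum_congr rfl h3, ← Finset.sum_add_distrib]
  refine Finset.sum_congr rfl fun j _ => ?_
  rw [add_comm]
  exact sum_Ico_consec _ (by omega) (by omega)

/-- lift a witness to the right of any bound -/
lemma per_lift_right {b : ℤ → ℤ} {r : ℤ} (hb : CyclePeriodic b r) (hr : 0 < r)
    (x c : ℤ) : ∃ x' : ℤ, c < x' ∧ b x' = b x ∧ b (x' + 1) = b (x + 1) := by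
  refine ⟨x + (|c - x| + 1) * r, ?_, ?_, ?_⟩
  · have h1 : |c - x| + 1 ≤ (|c - x| + 1) * r := by
      nlinarith [abs_nonneg (c - x)]
    have h2 : c - x ≤ |c - x| := le_abs_self _
    omega
  · exact per_mul hb x _
  · rw [show x + (|c - x| + 1) * r + 1 = (x + 1) + (|c - x| + 1) * r by ring]
    exact per_mul hb (x + 1) _

lemma per_lift_left {b : ℤ → ℤ} {r : ℤ} (hb : CyclePeriodic b r) (hr : 0 < r)
    (x c : ℤ) : ∃ x' : ℤ, x' < c ∧ b x' = b x := by
  refine ⟨x + (-(|x - c| + 1)) * r, ?_, per_mul hb x _⟩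
  have h1 : |x - c| + 1 ≤ (|x - c| + 1) * r := by nlinarith [abs_nonneg (x - c)]
  have h2 : x - c ≤ |x - c| := le_abs_self _
  have h3 : x + (-(|x - c| + 1)) * r = x - (|x - c| + 1) * r := by ring
  omega

section blocs
variable {b : ℤ → ℤ} {r : ℤ}

lemma blocLen_spec (hb : CyclePeriodic b r) (hr : 0 < r) (hnc : ∃ i, b (i+1) ≠ b i) (j : ℤ) :
    0 < blocLen b j ∧ blocLen b j < r ∧ b (j + blocLen b j) ≠ b j ∧
      ∀ l, 0 ≤ l → l < blocLen b j → b (j + l) = b j := by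
  set S := {l : ℤ | 0 < l ∧ b (j + l) ≠ b j} with hS
  have hbdd : BddBelow S := ⟨0, fun x hx => le_of_lt hx.1⟩
  have hne : S.Nonempty := by
    obtain ⟨i0, hi0⟩ := hnc
    obtain ⟨x', hx1, hx2, hx3⟩ := per_lift_right hb hr i0 j
    by_cases h : b x' = b j
    · exact ⟨x' + 1 - j, by omega, by
        rw [show j + (x' + 1 - j) = x' + 1 by ring, hx3]
        rw [← hx2, h] at hi0
        exact fun hc => hi0 hc⟩
    · exact ⟨x' - j, by omega, by rw [show j + (x' - j) = x' by ring]; exact h⟩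
  have hmem := Int.csInf_mem hne hbdd
  have hmin : ∀ l ∈ S, sInf S ≤ l := fun l hl => csInf_le hbdd hl
  have h0 : 0 < sInf S := hmem.1
  have hconst : ∀ l, 0 ≤ l → l < sInf S → b (j + l) = b j := by
    intro l hl0 hl
    rcases eq_or_lt_of_le hl0 with h | h
    · rw [← h]; simp
    · by_contra hc
      exact absurd (hmin l ⟨h, hc⟩) (by omega)
  have hlt : sInf S < r := by
    rcases lt_trichotomy (sInf S) r with h | h | h
    · exact h
    · exfalso; apply hmem.2; rw [h, hb j]
    · exfalso
      have hmem2 : sInf S - r ∈ S := by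
        refine ⟨by omega, ?_⟩
        have := hb (j + (sInf S - r))
        rw [show j + (sInf S - r) + r = j + sInf S by ring] at this
        rw [← this]; exact hmem.2
      exact absurd (hmin _ hmem2) (by omega)
  exact ⟨h0, hlt, hmem.2, hconst⟩

lemma partLen_spec (hb : CyclePeriodic b r) (hr : 0 < r) (hneg : ∃ x, b x < 0)
    (i : ℤ) (hi : 0 ≤ b i) :
    0 < partLen b i ∧ partLen b i < r ∧ b (i + partLen b i) < 0 ∧
      ∀ l, 0 ≤ l → l < partLen b i → 0 ≤ b (i + l) := by
  set S := {l : ℤ | 0 < l ∧ b (i + l) < 0} with hS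
  have hbdd : BddBelow S := ⟨0, fun x hx => le_of_lt hx.1⟩
  have hne : S.Nonempty := by
    obtain ⟨x, hx⟩ := hneg
    obtain ⟨x', hx1, hx2, _⟩ := per_lift_right hb hr x i
    exact ⟨x' - i, by omega, by rw [show i + (x' - i) = x' by ring, hx2]; exact hx⟩
  have hmem := Int.csInf_mem hne hbdd
  have hmin : ∀ l ∈ S, sInf S ≤ l := fun l hl => csInf_le hbdd hl
  have hconst : ∀ l, 0 ≤ l → l < sInf S → 0 ≤ b (i + l) := by
    intro l hl0 hl
    rcases eq_or_lt_of_le hl0 with h | h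
    · rw [← h]; simpa using hi
    · by_contra hc
      exact absurd (hmin l ⟨h, by omega⟩) (by omega)
  have hlt : sInf S < r := by
    rcases lt_trichotomy (sInf S) r with h | h | h
    · exact h
    · exfalso
      have := hmem.2
      rw [h, hb i] at this; omega
    · exfalso
      have hmem2 : sInf S - r ∈ S := by
        refine ⟨by omega, ?_⟩
        have := hb (i + (sInf S - r))
        rw [show i + (sInf S - r) + r = i + sInf S by ring] at this
        rw [← this]; exact hmem.2
      exact absurd (hmin _ hmem2) (by omega)
  exact ⟨hmem.1, hlt, hmem.2, hconst⟩

/-- every nonnegative position lies in a unique part -/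
lemma part_cover (hb : CyclePeriodic b r) (hr : 0 < r) (hneg : ∃ x, b x < 0)
    (j : ℤ) (hj : 0 ≤ b j) :
    ∃! i, (0 ≤ b i ∧ b (i-1) < 0) ∧ i ≤ j ∧ j < i + partLen b i := by
  set T := {d : ℤ | 0 < d ∧ b (j - d) < 0} with hT
  have hbdd : BddBelow T := ⟨0, fun x hx => le_of_lt hx.1⟩
  have hne : T.Nonempty := by
    obtain ⟨x, hx⟩ := hneg
    obtain ⟨x', hx1, hx2⟩ := per_lift_left hb hr x j
    exact ⟨j - x', by omega, by rw [show j - (j - x') = x' by ring, hx2]; exact hx⟩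
  have hmem := Int.csInf_mem hne hbdd
  have hmin : ∀ l ∈ T, sInf T ≤ l := fun l hl => csInf_le hbdd hl
  set d0 := sInf T with hd0
  have hnn : ∀ e, 0 ≤ e → e < d0 → 0 ≤ b (j - e) := by
    intro e he0 he
    rcases eq_or_lt_of_le he0 with h | h
    · rw [← h]; simpa using hj
    · by_contra hc
      exact absurd (hmin e ⟨h, by omega⟩) (by omega)
  refine ⟨j - d0 + 1, ⟨⟨?_, ?_⟩, by have := hmem.1; omega, ?_⟩, ?_⟩
  · have := hnn (d0 - 1) (by have := hmem.1; omega) (by omega)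
    rwa [show j - (d0 - 1) = j - d0 + 1 by ring] at this
  · rw [show j - d0 + 1 - 1 = j - d0 by ring]; exact hmem.2
  · -- j < (j - d0 + 1) + partLen b (j - d0 + 1)
    set i := j - d0 + 1 with hi
    have hbi : 0 ≤ b i := by
      have := hnn (d0 - 1) (by have := hmem.1; omega) (by omega)
      rwa [show j - (d0 - 1) = i by omega] at this
    obtain ⟨hp1, hp2, hp3, hp4⟩ := partLen_spec hb hr hneg i hbi
    by_contra hcon
    push_neg at hcon
    have hle : partLen b i ≤ d0 - 1 := by omega
    have := hnn (d0 - 1 - partLen b i) (by omega) (by omega)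
    rw [show j - (d0 - 1 - partLen b i) = i + partLen b i by omega] at this
    omega
  · rintro i' ⟨⟨hi'0, hi'1⟩, hi'2, hi'3⟩
    obtain ⟨hq1, hq2, hq3, hq4⟩ := partLen_spec hb hr hneg i' hi'0
    -- show i' = j - d0 + 1, i.e. j - i' = d0 - 1
    have hub : j - i' < d0 := by
      by_contra hcon
      push_neg at hcon
      -- then b (i' - 1) ≥ 0 since i' - 1 = j - (j - i' + 1) with j-i'+1 ≤ d0 ... careful
      -- b (j - d0) < 0 and j - d0 ∈ [i', j] would contradict part nonneg
      have : 0 ≤ b (j - d0) := by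
        have hd0pos : 0 < d0 := hmem.1
        have := hq4 (j - d0 - i') (by omega) (by omega)
        rwa [show i' + (j - d0 - i') = j - d0 by ring] at this
      exact absurd hmem.2 (by omega)
    have hlb : ¬ (j - i' < d0 - 1) := by
      intro hcon
      have := hnn (j - i' + 1) (by omega) (by omega)
      rw [show j - (j - i' + 1) = i' - 1 by ring] at this
      omega
    omega

/-- every bloc start has a unique predecessor bloc -/
lemma bloc_pred (hb : CyclePeriodic b r) (hr : 1 < r) (hnc : ∃ i, b (i+1) ≠ b i)
    (j : ℤ) (hj : blocStart b j) :
    ∃! i, blocStart b i ∧ j = i + blocLen b i := by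
  set v := b (j - 1) with hv
  set T := {d : ℤ | 0 < d ∧ b (j - 1 - d) ≠ v} with hT
  have hbdd : BddBelow T := ⟨0, fun x hx => le_of_lt hx.1⟩
  have hne : T.Nonempty := by
    refine ⟨r - 1, by omega, ?_⟩
    have hper : b (j - r) = b j := by
      have := hb (j - r); rw [show j - r + r = j by ring] at this; exact this.symm
    rw [show j - 1 - (r - 1) = j - r by ring, hper]
    exact fun hc => hj hc.symm
  have hmem := Int.csInf_mem hne hbdd
  have hmin : ∀ l ∈ T, sInf T ≤ l := fun l hl => csInf_le hbdd hl
  set d0 := sInf T with hd0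
  have hconst : ∀ e, 0 ≤ e → e < d0 → b (j - 1 - e) = v := by
    intro e he0 he
    rcases eq_or_lt_of_le he0 with h | h
    · rw [← h]; simp [hv]
    · by_contra hc
      exact absurd (hmin e ⟨h, hc⟩) (by omega)
  set i := j - d0 with hi
  have hbi : b i = v := by
    have := hconst (d0 - 1) (by have := hmem.1; omega) (by omega)
    rwa [show j - 1 - (d0 - 1) = i by omega] at this
  have hbs : blocStart b i := by
    show b (i - 1) ≠ b i
    rw [hbi, show i - 1 = j - 1 - d0 by omega]
    exact hmem.2
  have hlen : blocLen b i = d0 := by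
    set S := {l : ℤ | 0 < l ∧ b (i + l) ≠ b i} with hS
    have hbddS : BddBelow S := ⟨0, fun x hx => le_of_lt hx.1⟩
    have hd0S : d0 ∈ S := by
      refine ⟨hmem.1, ?_⟩
      rw [show i + d0 = j by omega, hbi]
      exact fun hc => hj hc.symm
    have h1 : sInf S ≤ d0 := csInf_le hbddS hd0S
    have h2 : sInf S ∈ S := Int.csInf_mem ⟨d0, hd0S⟩ hbddS
    by_contra hc
    have hlt : sInf S < d0 := by
      rcases lt_trichotomy (sInf S) d0 with h | h | h
      · exact h
      · exact absurd h hc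
      · omega
    have hSpos : 0 < sInf S := h2.1
    have := hconst (d0 - 1 - sInf S) (by omega) (by omega)
    rw [show j - 1 - (d0 - 1 - sInf S) = i + sInf S by omega] at this
    rw [← hbi] at this
    exact h2.2 this
  refine ⟨i, ⟨hbs, by omega⟩, ?_⟩
  rintro i' ⟨hbs', hlen'⟩
  obtain ⟨hl1, hl2, hl3, hl4⟩ := blocLen_spec hb (by omega) hnc i'
  -- b constant = b i' on [i', j), b (i'-1) ≠ b i'
  have hd' : j - i' ∈ T := by
    refine ⟨by omega, ?_⟩
    rw [show j - 1 - (j - i') = i' - 1 by ring]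
    have hbv : b (j - 1) = b i' := by
      have := hl4 (blocLen b i' - 1) (by omega) (by omega)
      rwa [show i' + (blocLen b i' - 1) = j - 1 by omega] at this
    rw [hv, hbv]
    exact hbs'
  have h1 : d0 ≤ j - i' := hmin _ hd'
  rcases eq_or_lt_of_le h1 with h | h
  · omega
  · exfalso
    have hd0pos : 0 < d0 := hmem.1
    have := hl4 (j - d0 - i') (by omega) (by omega)
    rw [show i' + (j - d0 - i') = j - d0 by ring] at this
    -- b (j - d0) = b i' ; but also b(j-1-d0) ≠ v while j-1-d0 ∈ [i', j)
    have h2 := hl4 (j - d0 - 1 - i') (by omega) (by omega)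
    rw [show i' + (j - d0 - 1 - i') = j - 1 - d0 by ring] at h2
    have hbv : b (j - 1) = b i' := by
      have := hl4 (blocLen b i' - 1) (by omega) (by omega)
      rwa [show i' + (blocLen b i' - 1) = j - 1 by omega] at this
    rw [← hbv] at h2
    exact hmem.2 h2
  
lemma blocStart_def (b : ℤ → ℤ) (i : ℤ) : blocStart b i ↔ b (i-1) ≠ b i := Iff.rfl

lemma partStart_def (b : ℤ → ℤ) (i : ℤ) : partStart b i ↔ 0 ≤ b i ∧ b (i-1) < 0 := Iff.rfl

lemma blocStart_per (hb : CyclePeriodic b r) (i : ℤ) :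
    blocStart b (i + r) ↔ blocStart b i := by
  rw [blocStart_def, blocStart_def, hb i]
  have : i + r - 1 = (i - 1) + r := by ring
  rw [this, hb (i-1)]

lemma partStart_per (hb : CyclePeriodic b r) (i : ℤ) :
    partStart b (i + r) ↔ partStart b i := by
  rw [partStart_def, partStart_def, hb i]
  have : i + r - 1 = (i - 1) + r := by ring
  rw [this, hb (i-1)]

lemma blocLen_per (hb : CyclePeriodic b r) (i : ℤ) :
    blocLen b (i + r) = blocLen b i := by
  unfold blocLen
  congr 1
  ext l
  simp only [Set.mem_setOf_eq]
  rw [hb i, show i + r + l = (i + l) + r by ring, hb (i + l)]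

lemma partLen_per (hb : CyclePeriodic b r) (i : ℤ) :
    partLen b (i + r) = partLen b i := by
  unfold partLen
  congr 1
  ext l
  simp only [Set.mem_setOf_eq]
  rw [show i + r + l = (i + l) + r by ring, hb (i + l)]

lemma blocEps_per (hb : CyclePeriodic b r) (i : ℤ) :
    blocEps b (i + r) = blocEps b i := by
  unfold blocEps
  rw [blocLen_per hb, hb i, show i + r - 1 = (i - 1) + r by ring, hb (i - 1),
    show i + r + blocLen b i = (i + blocLen b i) + r by ring, hb (i + blocLen b i)]

lemma eps_formula (hb : CyclePeriodic b r) (hr : 0 < r) (hnc : ∃ i, b (i+1) ≠ b i)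
    (j : ℤ) (hj : blocStart b j) :
    blocEps b j = (if b (j-1) < b j then 1 else 0) - (if b j < b (j + blocLen b j) then 1 else 0) := by
  have h3 := (blocLen_spec hb hr hnc j).2.2.1
  rw [blocStart_def] at hj
  unfold blocEps
  split_ifs <;> omega

lemma eps_one (j : ℤ) (h : blocEps b j = 1) :
    b (j-1) < b j ∧ b (j + blocLen b j) < b j := by
  unfold blocEps at h
  split_ifs at h with h1 h2
  · exact h1
  · omega

/-- Key counting: sum of part lengths = number of nonnegative entries. -/
lemma part_count (hb : CyclePeriodic b r) (hr : 0 < r) (hneg : ∃ x, b x < 0) (t : ℤ) :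
    ∑ i ∈ Finset.Ico t (t+r), (if partStart b i then partLen b i else 0)
      = ∑ j ∈ Finset.Ico t (t+r), (if 0 ≤ b j then 1 else 0) := by
  set K : ℤ → ℤ → ℤ := fun i j => if partStart b i ∧ i ≤ j ∧ j < i + partLen b i then 1 else 0 with hK
  have hKper : ∀ i j, K (i + r) (j + r) = K i j := by
    intro i j
    simp only [hK]
    refine if_congr ?_ rfl rfl
    rw [partStart_per hb, partLen_per hb]
    constructor
    · rintro ⟨h1, h2, h3⟩; exact ⟨h1, by omega, by omega⟩
    · rintro ⟨h1, h2, h3⟩; exact ⟨h1, by omega, by omega⟩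
  have hKsupp : ∀ i j, K i j ≠ 0 → i ≤ j ∧ j < i + r := by
    intro i j h
    simp only [hK] at h
    by_cases hc : partStart b i ∧ i ≤ j ∧ j < i + partLen b i
    · obtain ⟨h1, h2, h3⟩ := hc
      have := (partLen_spec hb hr hneg i h1.1).2.1
      exact ⟨h2, by omega⟩
    · simp [hc] at h
  have hfub := periodic_fubini hr K hKper hKsupp t
  have hL : ∀ i ∈ Finset.Ico t (t+r),
      ∑ j ∈ Finset.Ico i (i+r), K i j = if partStart b i then partLen b i else 0 := by
    intro i _
    by_cases hp : partStart b i
    · obtain ⟨hp1, hp2, hp3, hp4⟩ := partLen_spec hb hr hneg i hp.1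
      rw [if_pos hp]
      have hsum : ∀ j ∈ Finset.Ico i (i+r), K i j = if j ∈ Finset.Ico i (i + partLen b i) then 1 else 0 := by
        intro j _
        simp only [hK, Finset.mem_Ico]
        refine if_congr ?_ rfl rfl
        constructor
        · rintro ⟨_, h2, h3⟩; exact ⟨h2, h3⟩
        · rintro ⟨h2, h3⟩; exact ⟨hp, h2, h3⟩
      rw [Finset.sum_congr rfl hsum, Finset.sum_ite_mem]
      have hinter : Finset.Ico i (i+r) ∩ Finset.Ico i (i + partLen b i) = Finset.Ico i (i + partLen b i) := by
        ext x
        simp only [Finset.mem_inter, Finset.mem_Ico]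
        omega
      rw [hinter, Finset.sum_const, Int.card_Ico]
      simp only [nsmul_eq_mul, mul_one]
      omega
    · rw [if_neg hp]
      apply Finset.sum_eq_zero
      intro j _
      simp only [hK]
      rw [if_neg]
      rintro ⟨h1, _⟩
      exact hp h1
  have hR : ∀ j ∈ Finset.Ico t (t+r),
      ∑ i ∈ Finset.Ico (t-r) (t+r), K i j = if 0 ≤ b j then 1 else 0 := by
    intro j hj
    simp only [Finset.mem_Ico] at hj
    by_cases hbj : 0 ≤ b j
    · rw [if_pos hbj]
      obtain ⟨i0, ⟨hi01, hi02, hi03⟩, hi0u⟩ := part_cover hb hr hneg j hbj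
      have hi0r := (partLen_spec hb hr hneg i0 hi01.1).2.1
      have hi0mem : i0 ∈ Finset.Ico (t-r) (t+r) := by
        simp only [Finset.mem_Ico]; omega
      rw [Finset.sum_eq_single_of_mem i0 hi0mem]
      · simp only [hK]
        rw [if_pos ⟨hi01, hi02, hi03⟩]
      · intro i _ hne
        simp only [hK]
        rw [if_neg]
        rintro ⟨h1, h2, h3⟩
        exact hne (hi0u i ⟨h1, h2, h3⟩)
    · rw [if_neg hbj]
      apply Finset.sum_eq_zero
      intro i _
      simp only [hK]
      rw [if_neg]
      rintro ⟨h1, h2, h3⟩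
      have := (partLen_spec hb hr hneg i h1.1).2.2.2 (j - i) (by omega) (by omega)
      rw [show i + (j - i) = j by ring] at this
      exact hbj this
  rw [Finset.sum_congr rfl hL] at hfub
  rw [Finset.sum_congr rfl hR] at hfub
  exact hfub

/-- Reindexing step: sum over blocs of an indicator at the bloc vs at its successor. -/
lemma bloc_reindex (hb : CyclePeriodic b r) (hr : 1 < r) (hnc : ∃ i, b (i+1) ≠ b i) (t : ℤ) :
    ∑ j ∈ Finset.Ico t (t+r),
        (if blocStart b j ∧ 0 ≤ b j ∧ b j < b (j + blocLen b j) then (1:ℤ) else 0)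
      = ∑ j ∈ Finset.Ico t (t+r),
        (if blocStart b j ∧ 0 ≤ b (j-1) ∧ b (j-1) < b j then (1:ℤ) else 0) := by
  have hr0 : 0 < r := by omega
  set K : ℤ → ℤ → ℤ := fun i j =>
    if blocStart b i ∧ j = i + blocLen b i ∧ 0 ≤ b i ∧ b i < b j then (1:ℤ) else 0 with hK
  have hKper : ∀ i j, K (i + r) (j + r) = K i j := by
    intro i j
    simp only [hK]
    refine if_congr ?_ rfl rfl
    rw [blocStart_per hb, blocLen_per hb, hb i, hb j]
    constructor
    · rintro ⟨h1, h2, h3⟩; exact ⟨h1, by omega, h3⟩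
    · rintro ⟨h1, h2, h3⟩; exact ⟨h1, by omega, h3⟩
  have hKsupp : ∀ i j, K i j ≠ 0 → i ≤ j ∧ j < i + r := by
    intro i j h
    simp only [hK] at h
    by_cases hc : blocStart b i ∧ j = i + blocLen b i ∧ 0 ≤ b i ∧ b i < b j
    · obtain ⟨h1, h2, h3⟩ := hc
      obtain ⟨hl1, hl2, _, _⟩ := blocLen_spec hb hr0 hnc i
      omega
    · simp [hc] at h
  have hfub := periodic_fubini hr0 K hKper hKsupp t
  have hL : ∀ i ∈ Finset.Ico t (t+r),
      ∑ j ∈ Finset.Ico i (i+r), K i j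
        = if blocStart b i ∧ 0 ≤ b i ∧ b i < b (i + blocLen b i) then 1 else 0 := by
    intro i _
    obtain ⟨hl1, hl2, hl3, hl4⟩ := blocLen_spec hb hr0 hnc i
    by_cases hc : blocStart b i ∧ 0 ≤ b i ∧ b i < b (i + blocLen b i)
    · rw [if_pos hc]
      rw [Finset.sum_eq_single_of_mem (i + blocLen b i)
        (by simp only [Finset.mem_Ico]; omega)]
      · show (if blocStart b i ∧ i + blocLen b i = i + blocLen b i ∧ 0 ≤ b i ∧
            b i < b (i + blocLen b i) then (1:ℤ) else 0) = 1
        exact if_pos ⟨hc.1, rfl, hc.2.1, hc.2.2⟩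
      · intro j _ hne
        simp only [hK]
        rw [if_neg]
        rintro ⟨_, h2, _⟩
        exact hne h2
    · rw [if_neg hc]
      apply Finset.sum_eq_zero
      intro j _
      simp only [hK]
      rw [if_neg]
      rintro ⟨h1, h2, h3, h4⟩
      rw [h2] at h4
      exact hc ⟨h1, h3, h4⟩
  have hR : ∀ j ∈ Finset.Ico t (t+r),
      ∑ i ∈ Finset.Ico (t-r) (t+r), K i j
        = if blocStart b j ∧ 0 ≤ b (j-1) ∧ b (j-1) < b j then 1 else 0 := by
    intro j hj
    simp only [Finset.mem_Ico] at hj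
    by_cases hc : blocStart b j ∧ 0 ≤ b (j-1) ∧ b (j-1) < b j
    · rw [if_pos hc]
      obtain ⟨i0, ⟨hi01, hi02⟩, hi0u⟩ := bloc_pred hb hr hnc j hc.1
      obtain ⟨hl1, hl2, hl3, hl4⟩ := blocLen_spec hb hr0 hnc i0
      have hprev : b (j - 1) = b i0 := by
        have := hl4 (blocLen b i0 - 1) (by omega) (by omega)
        rwa [show i0 + (blocLen b i0 - 1) = j - 1 by omega] at this
      rw [Finset.sum_eq_single_of_mem i0 (by simp only [Finset.mem_Ico]; omega)]
      · simp only [hK]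
        rw [if_pos ⟨hi01, hi02, by rw [← hprev]; exact hc.2.1, by rw [← hprev]; exact hc.2.2⟩]
      · intro i _ hne
        simp only [hK]
        rw [if_neg]
        rintro ⟨h1, h2, _⟩
        exact hne (hi0u i ⟨h1, h2⟩)
    · rw [if_neg hc]
      apply Finset.sum_eq_zero
      intro i _
      simp only [hK]
      rw [if_neg]
      rintro ⟨h1, h2, h3, h4⟩
      obtain ⟨hl1, hl2, hl3, hl4⟩ := blocLen_spec hb hr0 hnc i
      have hprev : b (j - 1) = b i := by
        have := hl4 (blocLen b i - 1) (by omega) (by omega)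
        rwa [show i + (blocLen b i - 1) = j - 1 by omega] at this
      apply hc
      refine ⟨?_, ?_, ?_⟩
      · rw [blocStart_def, hprev, h2]
        omega
      · rw [hprev]; exact h3
      · rw [hprev]; exact h4
  rw [Finset.sum_congr rfl hL, Finset.sum_congr rfl hR] at hfub
  exact hfub

/-- Mountain identity: the number of positive parts equals the sum of ε over
nonnegative blocs. -/
lemma mountain (hb : CyclePeriodic b r) (hr : 1 < r) (hnc : ∃ i, b (i+1) ≠ b i) (t : ℤ) :
    ∑ j ∈ Finset.Ico t (t+r), (if partStart b j then (1:ℤ) else 0)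
      = ∑ j ∈ Finset.Ico t (t+r), (if blocStart b j ∧ 0 ≤ b j then blocEps b j else 0) := by
  have hr0 : 0 < r := by omega
  have step1 : ∀ j ∈ Finset.Ico t (t+r),
      (if blocStart b j ∧ 0 ≤ b j then blocEps b j else 0)
        = (if blocStart b j ∧ 0 ≤ b j ∧ b (j-1) < b j then 1 else 0)
          - (if blocStart b j ∧ 0 ≤ b j ∧ b j < b (j + blocLen b j) then 1 else 0) := by
    intro j _
    by_cases hbS : blocStart b j
    · by_cases h0 : 0 ≤ b j
      · rw [if_pos ⟨hbS, h0⟩, eps_formula hb hr0 hnc j hbS,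
          if_congr (show (blocStart b j ∧ 0 ≤ b j ∧ b (j-1) < b j) ↔ b (j-1) < b j by tauto)
            rfl rfl,
          if_congr (show (blocStart b j ∧ 0 ≤ b j ∧ b j < b (j + blocLen b j)) ↔
            b j < b (j + blocLen b j) by tauto) rfl rfl]
      · rw [if_neg (by tauto), if_neg (by tauto), if_neg (by tauto)]
        ring
    · rw [if_neg (by tauto), if_neg (by tauto), if_neg (by tauto)]
      ring
  rw [Finset.sum_congr rfl step1, Finset.sum_sub_distrib, bloc_reindex hb hr hnc t,
    ← Finset.sum_sub_distrib]
  refine Finset.sum_congr rfl fun j _ => ?_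
  simp only [partStart_def, blocStart_def]
  split_ifs <;> omega

lemma sInf_eq_of {S : Set ℤ} (d : ℤ) (hd : d ∈ S) (hmin : ∀ l ∈ S, d ≤ l) :
    sInf S = d :=
  le_antisymm (csInf_le ⟨d, hmin⟩ hd) (le_csInf ⟨d, hd⟩ hmin)

/-- An all-zero part is the same as a locally maximal zero bloc. -/
lemma zero_part_iff (hb : CyclePeriodic b r) (hr : 0 < r) (hneg : ∃ x, b x < 0)
    (hnc : ∃ i, b (i+1) ≠ b i) (j : ℤ) :
    (partStart b j ∧ ∀ x ∈ Finset.Ico j (j + partLen b j), b x = 0)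
      ↔ (blocStart b j ∧ b j = 0 ∧ blocEps b j = 1) := by
  constructor
  · rintro ⟨hp, hz⟩
    obtain ⟨hp1, hp2, hp3, hp4⟩ := partLen_spec hb hr hneg j hp.1
    have hj0 : b j = 0 := hz j (by simp only [Finset.mem_Ico]; omega)
    have hbs : blocStart b j := by
      rw [blocStart_def, hj0]
      have := hp.2
      omega
    have hlen : blocLen b j = partLen b j := by
      apply sInf_eq_of
      · refine ⟨hp1, ?_⟩
        rw [hj0]
        omega
      · rintro l ⟨hl1, hl2⟩
        by_contra hcon
        push_neg at hcon
        have := hz (j + l) (by simp only [Finset.mem_Ico]; omega)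
        rw [this, hj0] at hl2
        exact hl2 rfl
    refine ⟨hbs, hj0, ?_⟩
    unfold blocEps
    rw [if_pos]
    rw [hlen, hj0]
    exact ⟨by have := hp.2; omega, by omega⟩
  · rintro ⟨hbs, hj0, heps⟩
    obtain ⟨he1, he2⟩ := eps_one j heps
    obtain ⟨hl1, hl2, hl3, hl4⟩ := blocLen_spec hb hr hnc j
    have hps : partStart b j := ⟨by omega, by omega⟩
    have hlen : partLen b j = blocLen b j := by
      apply sInf_eq_of
      · exact ⟨hl1, by omega⟩
      · rintro l ⟨hll1, hll2⟩
        by_contra hcon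
        push_neg at hcon
        have := hl4 l (by omega) (by omega)
        omega
    refine ⟨hps, ?_⟩
    intro x hx
    simp only [Finset.mem_Ico] at hx
    have := hl4 (x - j) (by omega) (by omega)
    rw [show j + (x - j) = x by ring] at this
    omega

/-- θ decomposition into local sums. -/
lemma theta_eq (hb : CyclePeriodic b r) (hr : 1 < r) (hnc : ∃ i, b (i+1) ≠ b i) (t : ℤ) :
    thetaSum b r t =
      (∑ j ∈ Finset.Ico t (t+r), if 0 ≤ b j then (1:ℤ) else 0)
      + (∑ j ∈ Finset.Ico t (t+r), if blocStart b j ∧ 0 ≤ b j then blocEps b j else 0)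
      - (∑ j ∈ Finset.Ico t (t+r), if blocStart b j ∧ b j = 0 ∧ blocEps b j = 1 then (1:ℤ) else 0) := by
  have hr0 : 0 < r := by omega
  by_cases hall : ∀ j ∈ Finset.Ico t (t + r), 0 ≤ b j
  · rw [thetaSum, if_pos hall]
    have hall' : ∀ x, 0 ≤ b x := by
      intro x
      obtain ⟨x', hx', he⟩ := per_reduce hr0 hb t x
      rw [← he]
      exact hall x' hx'
    have hN : (∑ j ∈ Finset.Ico t (t+r), if 0 ≤ b j then (1:ℤ) else 0) = r := by
      rw [Finset.sum_congr rfl (fun j _ => if_pos (hall' j)), Finset.sum_const, Int.card_Ico]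
      simp only [nsmul_eq_mul, mul_one]
      omega
    have hE : (∑ j ∈ Finset.Ico t (t+r), if blocStart b j ∧ 0 ≤ b j then blocEps b j else 0) = 0 := by
      rw [← mountain hb hr hnc t]
      apply Finset.sum_eq_zero
      intro j _
      rw [if_neg]
      rintro ⟨_, h2⟩
      exact absurd (hall' (j-1)) (by omega)
    have hZ : (∑ j ∈ Finset.Ico t (t+r), if blocStart b j ∧ b j = 0 ∧ blocEps b j = 1 then (1:ℤ) else 0) = 0 := by
      apply Finset.sum_eq_zero
      intro j _
      rw [if_neg]
      rintro ⟨h1, h2, h3⟩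
      have := (eps_one j h3).2
      exact absurd (hall' (j + blocLen b j)) (by omega)
    rw [hN, hE, hZ]
    ring
  · rw [thetaSum, if_neg hall]
    push_neg at hall
    obtain ⟨j0, _, hj0⟩ := hall
    have hneg : ∃ x, b x < 0 := ⟨j0, by omega⟩
    have hpt : ∀ j ∈ Finset.Ico t (t+r),
        (if partStart b j then thetaP b j else 0)
          = (if partStart b j then partLen b j else 0)
            + (if partStart b j then (1:ℤ) else 0)
            - (if partStart b j ∧ ∀ x ∈ Finset.Ico j (j + partLen b j), b x = 0 then (1:ℤ) else 0) := by
      intro j _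
      unfold thetaP
      split_ifs <;> first | tauto | ring
    rw [Finset.sum_congr rfl hpt, Finset.sum_sub_distrib, Finset.sum_add_distrib,
      part_count hb hr0 hneg t, mountain hb hr hnc t]
    congr 1
    refine Finset.sum_congr rfl fun j _ => ?_
    exact if_congr (zero_part_iff hb hr0 hneg hnc j) rfl rfl

end blocs

section shift
variable (a : ℤ → ℤ) (c j : ℤ)

lemma blocStart_shift : blocStart (fun x => a x + c) j ↔ blocStart a j := by
  simp only [blocStart_def, ne_eq, add_left_inj]

lemma blocLen_shift : blocLen (fun x => a x + c) j = blocLen a j := by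
  unfold blocLen
  congr 1
  ext l
  simp only [Set.mem_setOf_eq, ne_eq, add_left_inj]

lemma blocEps_shift : blocEps (fun x => a x + c) j = blocEps a j := by
  unfold blocEps
  rw [blocLen_shift]
  simp only [add_lt_add_iff_right]

end shift

section mini

def Mw (n k : ℤ) : ℤ :=
  if n % 3 = 1 then
    2 * (if k = (n+2)/3 then (1:ℤ) else 0) + (if k = (n+2)/3 + 1 then (1:ℤ) else 0)
  else if n % 3 = 2 then
    (if k = (n+1)/3 then (1:ℤ) else 0) + 2 * (if k = (n+1)/3 + 1 then (1:ℤ) else 0)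
  else 3 * (if k = n/3 + 1 then (1:ℤ) else 0)

def Sw (n k : ℤ) : ℤ :=
  (if k = (n+2)/3 + 1 then (1:ℤ) else 0) - (if k = (n+2)/3 then (1:ℤ) else 0)

def Bw (n k : ℤ) : ℤ :=
  if n % 3 = 0 then
    (if k = n/3 then (1:ℤ) else 0) - 2 * (if k = n/3 + 1 then (1:ℤ) else 0)
      + (if k = n/3 + 2 then (1:ℤ) else 0)
  else 0

set_option maxHeartbeats 1600000 in
lemma mini1 (v k : ℤ) :
    (max (v + 3*k + 1) 0 - 2 * max (v + 3*(k-1) + 1) 0 + max (v + 3*(k-2) + 1) 0)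
      - ((if 0 ≤ v + 3*k then (1:ℤ) else 0) - 2 * (if 0 ≤ v + 3*(k-1) then (1:ℤ) else 0)
          + (if 0 ≤ v + 3*(k-2) then (1:ℤ) else 0))
    = Mw (-v) k := by
  unfold Mw
  have h3 : (-v) % 3 = 0 ∨ (-v) % 3 = 1 ∨ (-v) % 3 = 2 := by omega
  rcases h3 with h | h | h
  · rw [if_neg (show ¬((-v) % 3 = 1) by omega), if_neg (show ¬((-v) % 3 = 2) by omega)]
    simp only [max_def]
    split_ifs <;> omega
  · rw [if_pos h]
    simp only [max_def]
    split_ifs <;> omega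
  · rw [if_neg (show ¬((-v) % 3 = 1) by omega), if_pos h]
    simp only [max_def]
    split_ifs <;> omega

lemma mini2 (v k : ℤ) :
    -((if 0 ≤ v + 3*k then (1:ℤ) else 0) - 2 * (if 0 ≤ v + 3*(k-1) then (1:ℤ) else 0)
        + (if 0 ≤ v + 3*(k-2) then (1:ℤ) else 0))
      = Sw (-v) k := by
  unfold Sw
  split_ifs <;> omega

lemma mini3 (v k : ℤ) :
    (if v + 3*k = 0 then (1:ℤ) else 0) - 2 * (if v + 3*(k-1) = 0 then (1:ℤ) else 0)
      + (if v + 3*(k-2) = 0 then (1:ℤ) else 0)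
    = Bw (-v) k := by
  unfold Bw
  split_ifs <;> omega

lemma ite_and_mul (p q : Prop) [Decidable p] [Decidable q] (x : ℤ) :
    (if p ∧ q then x else 0) = (if p then x else 0) * (if q then 1 else 0) := by
  split_ifs <;> first | tauto | ring

lemma ite_and3_mul (p q s : Prop) [Decidable p] [Decidable q] [Decidable s] :
    (if p ∧ q ∧ s then (1:ℤ) else 0) = (if p ∧ s then (1:ℤ) else 0) * (if q then 1 else 0) := by
  split_ifs <;> first | tauto | ring

end mini

end P4aux

/-- Theorem 2.15: for an aperiodic cycle of length `r > 1` with distinct entries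
`-n i` of multiplicity `m i`, with `s i`, `B i` as defined from the blocs, and
`γ₄(a) = Σ max(aⱼ+1, 0) − θ(a)`, the Laurent polynomial
`P₄(a) = (1-T)² Σ_k γ₄(a(k)) Tᵏ` (given coefficient-wise by
`c k - 2c(k-1) + c(k-2)` with `c k = γ₄(a(k))`) is the sum over `i` of:
`T^{(nᵢ+2)/3}((2mᵢ−sᵢ) + (mᵢ+sᵢ)T)` if `nᵢ ≡ 1 (3)`,
`T^{(nᵢ+1)/3}((mᵢ−sᵢ) + (2mᵢ+sᵢ)T)` if `nᵢ ≡ 2 (3)`, and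
`T^{nᵢ/3}(−sᵢ + (3mᵢ+sᵢ)T + Bᵢ(1−T)²)` if `nᵢ ≡ 0 (3)`. -/
theorem P_four_formula (a : ℤ → ℤ) (r : ℤ) (hr : 1 < r)
    (hap : CycleAperiodic a r) (t : ℤ)
    (ι : Type*) [Fintype ι] [DecidableEq ι] (n : ι → ℤ)
    (hninj : Function.Injective n)
    (hcover : ∀ j ∈ Finset.Ico t (t + r), ∃ i, a j = -n i)
    (honto : ∀ i, ∃ j ∈ Finset.Ico t (t + r), a j = -n i)
    (m : ι → ℤ)
    (hm : ∀ i, m i = ((Finset.Ico t (t + r)).filter fun j => a j = -n i).card)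
    (s B : ι → ℤ)
    (hs : ∀ i, s i = ∑ j ∈ Finset.Ico t (t + r),
      if blocStart a j ∧ a j = -n i then blocEps a j else 0)
    (hB : ∀ i, B i = ∑ j ∈ Finset.Ico t (t + r),
      if blocStart a j ∧ a j = -n i ∧ blocEps a j = 1 then 1 else 0) :
    ∀ k : ℤ,
      (fun c : ℤ → ℤ => c k - 2 * c (k - 1) + c (k - 2))
        (fun k' => (∑ j ∈ Finset.Ico t (t + r), max (a j + 3 * k' + 1) 0) -
          thetaSum (fun j => a j + 3 * k') r t) =
        ∑ i,
          if n i % 3 = 1 then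
            (if k = (n i + 2) / 3 then 2 * m i - s i else 0) +
              (if k = (n i + 2) / 3 + 1 then m i + s i else 0)
          else if n i % 3 = 2 then
            (if k = (n i + 1) / 3 then m i - s i else 0) +
              (if k = (n i + 1) / 3 + 1 then 2 * m i + s i else 0)
          else
            (if k = n i / 3 then -s i + B i else 0) +
              (if k = n i / 3 + 1 then 3 * m i + s i - 2 * B i else 0) +
              (if k = n i / 3 + 2 then B i else 0) := by
  intro k
  simp only
  have hper : CyclePeriodic a r := hap.1
  have hnc : ∃ i, a (i + 1) ≠ a i := by
    have h1 := hap.2 1 one_pos hr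
    unfold CyclePeriodic at h1
    push_neg at h1
    exact h1
  have hbper : ∀ c : ℤ, CyclePeriodic (fun j => a j + c) r := by
    intro c i
    simp only
    rw [hper i]
  have hbnc : ∀ c : ℤ, ∃ i, (fun j => a j + c) (i + 1) ≠ (fun j => a j + c) i := by
    intro c
    obtain ⟨i, hi⟩ := hnc
    exact ⟨i, by simpa using hi⟩
  have htheta : ∀ k' : ℤ, thetaSum (fun j => a j + 3 * k') r t
      = (∑ j ∈ Finset.Ico t (t + r), if 0 ≤ a j + 3 * k' then (1:ℤ) else 0)
        + (∑ j ∈ Finset.Ico t (t + r), if blocStart a j ∧ 0 ≤ a j + 3 * k' then blocEps a j else 0)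
        - (∑ j ∈ Finset.Ico t (t + r),
            if blocStart a j ∧ a j + 3 * k' = 0 ∧ blocEps a j = 1 then (1:ℤ) else 0) := by
    intro k'
    rw [P4aux.theta_eq (hbper (3 * k')) hr (hbnc (3 * k')) t]
    simp only [P4aux.blocEps_shift, P4aux.blocStart_shift]
  rw [htheta k, htheta (k-1), htheta (k-2)]
  -- rewrite the RHS into a single window sum
  have hstep1 : ∀ i : ι,
      (if n i % 3 = 1 then
        (if k = (n i + 2) / 3 then 2 * m i - s i else 0) +
          (if k = (n i + 2) / 3 + 1 then m i + s i else 0)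
      else if n i % 3 = 2 then
        (if k = (n i + 1) / 3 then m i - s i else 0) +
          (if k = (n i + 1) / 3 + 1 then 2 * m i + s i else 0)
      else
        (if k = n i / 3 then -s i + B i else 0) +
          (if k = n i / 3 + 1 then 3 * m i + s i - 2 * B i else 0) +
          (if k = n i / 3 + 2 then B i else 0))
      = m i * P4aux.Mw (n i) k + s i * P4aux.Sw (n i) k + B i * P4aux.Bw (n i) k := by
    intro i
    unfold P4aux.Mw P4aux.Sw P4aux.Bw
    have h3 : n i % 3 = 0 ∨ n i % 3 = 1 ∨ n i % 3 = 2 := by omega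
    rcases h3 with h | h | h
    · rw [if_neg (show ¬(n i % 3 = 1) by omega), if_neg (show ¬(n i % 3 = 2) by omega),
        if_neg (show ¬(n i % 3 = 1) by omega), if_neg (show ¬(n i % 3 = 2) by omega),
        if_pos h]
      split_ifs <;> ring_nf <;> omega
    · rw [if_pos h, if_pos h, if_neg (show ¬(n i % 3 = 0) by omega)]
      split_ifs <;> ring_nf <;> omega
    · rw [if_neg (show ¬(n i % 3 = 1) by omega), if_pos h,
        if_neg (show ¬(n i % 3 = 1) by omega), if_pos h,
        if_neg (show ¬(n i % 3 = 0) by omega)]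
      split_ifs <;> ring_nf <;> omega
  rw [Finset.sum_congr rfl (fun i _ => hstep1 i)]
  -- express m, s, B as window sums and push inside
  have hm' : ∀ i : ι, m i = ∑ j ∈ Finset.Ico t (t + r), (if a j = -n i then (1:ℤ) else 0) := by
    intro i
    rw [hm i, Finset.card_filter]
    push_cast
    rfl
  have hexp : ∀ i : ι,
      m i * P4aux.Mw (n i) k + s i * P4aux.Sw (n i) k + B i * P4aux.Bw (n i) k
        = ∑ j ∈ Finset.Ico t (t + r),
            ((if a j = -n i then P4aux.Mw (n i) k else 0)
              + (if blocStart a j ∧ a j = -n i then blocEps a j * P4aux.Sw (n i) k else 0)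
              + (if blocStart a j ∧ a j = -n i ∧ blocEps a j = 1 then P4aux.Bw (n i) k else 0)) := by
    intro i
    rw [Finset.sum_add_distrib, Finset.sum_add_distrib, hm' i, hs i, hB i,
      Finset.sum_mul, Finset.sum_mul, Finset.sum_mul]
    congr 1
    · congr 1
      · exact Finset.sum_congr rfl fun j _ => by split_ifs <;> ring
      · exact Finset.sum_congr rfl fun j _ => by split_ifs <;> ring
    · exact Finset.sum_congr rfl fun j _ => by split_ifs <;> ring
  rw [Finset.sum_congr rfl (fun i _ => hexp i), Finset.sum_comm]
  -- evaluate the inner sum over i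
  have hinner : ∀ j ∈ Finset.Ico t (t + r),
      (∑ i : ι, ((if a j = -n i then P4aux.Mw (n i) k else 0)
        + (if blocStart a j ∧ a j = -n i then blocEps a j * P4aux.Sw (n i) k else 0)
        + (if blocStart a j ∧ a j = -n i ∧ blocEps a j = 1 then P4aux.Bw (n i) k else 0)))
      = P4aux.Mw (-(a j)) k
        + (if blocStart a j then blocEps a j else 0) * P4aux.Sw (-(a j)) k
        + (if blocStart a j ∧ blocEps a j = 1 then (1:ℤ) else 0) * P4aux.Bw (-(a j)) k := by
    intro j hj
    obtain ⟨i0, hi0⟩ := hcover j hj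
    have huniq : ∀ i : ι, a j = -n i → i = i0 := by
      intro i hi
      apply hninj
      omega
    rw [Finset.sum_add_distrib, Finset.sum_add_distrib]
    congr 1
    · congr 1
      · rw [Finset.sum_eq_single_of_mem i0 (Finset.mem_univ i0)]
        · rw [if_pos hi0, show n i0 = -(a j) by omega]
        · intro i _ hne
          rw [if_neg]
          intro hc
          exact hne (huniq i hc)
      · by_cases hbs : blocStart a j
        · rw [Finset.sum_eq_single_of_mem i0 (Finset.mem_univ i0)]
          · rw [if_pos ⟨hbs, hi0⟩, if_pos hbs, show n i0 = -(a j) by omega]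
          · intro i _ hne
            rw [if_neg]
            rintro ⟨_, hc⟩
            exact hne (huniq i hc)
        · rw [if_neg hbs, zero_mul]
          apply Finset.sum_eq_zero
          intro i _
          rw [if_neg]
          rintro ⟨hc, _⟩
          exact hbs hc
    · by_cases hz : blocStart a j ∧ blocEps a j = 1
      · rw [Finset.sum_eq_single_of_mem i0 (Finset.mem_univ i0)]
        · rw [if_pos ⟨hz.1, hi0, hz.2⟩, if_pos hz, one_mul, show n i0 = -(a j) by omega]
        · intro i _ hne
          rw [if_neg]
          rintro ⟨_, hc, _⟩
          exact hne (huniq i hc)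
      · rw [if_neg hz, zero_mul]
        apply Finset.sum_eq_zero
        intro i _
        rw [if_neg]
        rintro ⟨hc1, _, hc3⟩
        exact hz ⟨hc1, hc3⟩
  rw [Finset.sum_congr rfl hinner]
  -- fold the left-hand side into a single window sum
  simp only [Finset.mul_sum, ← Finset.sum_sub_distrib, ← Finset.sum_add_distrib]
  refine Finset.sum_congr rfl fun j _ => ?_
  rw [P4aux.ite_and_mul (blocStart a j) (0 ≤ a j + 3 * k) (blocEps a j),
    P4aux.ite_and_mul (blocStart a j) (0 ≤ a j + 3 * (k-1)) (blocEps a j),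
    P4aux.ite_and_mul (blocStart a j) (0 ≤ a j + 3 * (k-2)) (blocEps a j),
    P4aux.ite_and3_mul (blocStart a j) (a j + 3 * k = 0) (blocEps a j = 1),
    P4aux.ite_and3_mul (blocStart a j) (a j + 3 * (k-1) = 0) (blocEps a j = 1),
    P4aux.ite_and3_mul (blocStart a j) (a j + 3 * (k-2) = 0) (blocEps a j = 1)]
  linear_combination (P4aux.mini1 (a j) k)
    + (if blocStart a j then blocEps a j else 0) * (P4aux.mini2 (a j) k)
    + (if blocStart a j ∧ blocEps a j = 1 then (1:ℤ) else 0) * (P4aux.mini3 (a j) k)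
end
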